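/- Let α, δ, l, f > 0 with e^{δl/f} - 1 - (l/f)·αδ/(α+δ) ≥ 0 and β > αδ/(1 - e^{-δl/f}). Then for every τ ≥ 0 there exists a real x > 0 such that (x+α)(x+δ) = β e^{-xτ}(1 - e^{-(x+δ)l/f}); i.e., the characteristic function G has a positive real root, so the system has an eigenvalue with positive real part. -/

import Mathlib

/-- under the hypotheses, for every delay `τ ≥ 0` the
characteristic function has a positive real root `x`. -/
theorem exists_positive_real_root (α δ l f β : ℝ)
    (hα : 0 < α) (hδ : 0 < δ) (hl : 0 < l) (hf : 0 < f)
    (hcond : 0 ≤ Real.exp (δ * l / f) - 1 - (l / f) * (α * δ) / (α + δ))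
    (hβ : α * δ / (1 - Real.exp (-δ * l / f)) < β) :
    ∀ τ : ℝ, 0 ≤ τ → ∃ x : ℝ, 0 < x ∧
      (x + α) * (x + δ) = β * Real.exp (-x * τ) * (1 - Real.exp (-(x + δ) * l / f)) := by
  intro τ hτ
  -- basic positivity facts
  have hden : 0 < 1 - Real.exp (-δ * l / f) := by
    have : Real.exp (-δ * l / f) < 1 := by
      rw [Real.exp_lt_one_iff, neg_mul, neg_div, neg_lt, neg_zero]
      positivity
    linarith
  have hβpos : 0 < β := lt_trans (by positivity) hβ
  set g : ℝ → ℝ := fun x =>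
    (x + α) * (x + δ) - β * Real.exp (-x * τ) * (1 - Real.exp (-(x + δ) * l / f)) with hg
  have hcont : Continuous g := by fun_prop
  -- g 0 < 0
  have h0 : g 0 < 0 := by
    have : α * δ < β * (1 - Real.exp (-δ * l / f)) := by
      rw [div_lt_iff₀ hden] at hβ
      linarith
    simp only [hg]
    simp only [zero_add, neg_zero, zero_mul, Real.exp_zero, mul_one]
    nlinarith [this]
  -- g X > 0 for X = (β+1)/δ
  set X : ℝ := (β + 1) / δ with hX
  have hXpos : 0 < X := by positivity
  have hgX : 0 < g X := by
    have hb : β * Real.exp (-X * τ) * (1 - Real.exp (-(X + δ) * l / f)) ≤ β := by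
      have h1 : Real.exp (-X * τ) ≤ 1 := by
        rw [Real.exp_le_one_iff]
        nlinarith
      have h2 : 1 - Real.exp (-(X + δ) * l / f) ≤ 1 := by
        have := Real.exp_pos (-(X + δ) * l / f); linarith
      have h3 : 0 ≤ 1 - Real.exp (-(X + δ) * l / f) := by
        have : Real.exp (-(X + δ) * l / f) ≤ 1 := by
          rw [Real.exp_le_one_iff, neg_mul, neg_div, neg_nonpos]
          positivity
        linarith
      calc β * Real.exp (-X * τ) * (1 - Real.exp (-(X + δ) * l / f))
          ≤ β * 1 * 1 := by
            apply mul_le_mul _ h2 h3 (by positivity)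
            nlinarith [Real.exp_pos (-X * τ)]
        _ = β := by ring
    have hXδ : X * δ = β + 1 := by
      rw [hX, div_mul_cancel₀ _ hδ.ne']
    have : β + 1 ≤ (X + α) * (X + δ) := by nlinarith
    simp only [hg]
    linarith
  -- IVT
  have hIVT := intermediate_value_Icc (le_of_lt hXpos) hcont.continuousOn
  have h0mem : (0 : ℝ) ∈ Set.Icc (g 0) (g X) := ⟨le_of_lt h0, le_of_lt hgX⟩
  obtain ⟨x, hxmem, hx0⟩ := hIVT h0mem
  refine ⟨x, ?_, ?_⟩
  · rcases lt_or_eq_of_le hxmem.1 with h | h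
    · exact h
    · exfalso; rw [← h] at hx0; rw [hx0] at h0; exact lt_irrefl 0 h0
  · have : (x + α) * (x + δ) - β * Real.exp (-x * τ) * (1 - Real.exp (-(x + δ) * l / f)) = 0 := hx0
    linarith
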